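/- Let n ≥ k, d ≥ k, t ≥ 0 and s > 0. Suppose (i) every singular value σ_i of R' = ΦᵀR satisfies |σ_i − 1| ≤ (√k + t)/√d, and (ii) the optimal SC assignment X*_Φ partitions {1,…,n} into nonempty clusters each with within-cluster cost Σ_{i∈c_j} ‖φ_i − μ_j‖₂² ≥ s (φ_i the i-th row of Φ, μ_j the centroid of cluster j). Then C_Ψ ≤ C_Φ · (1 + 2(√k + t)/√(s·d)). -/

import Mathlib

open Matrix MeasureTheory ProbabilityTheory Finset

noncomputable section

/-- The `a × b` matrix with ones on the main diagonal and zeros elsewhere. -/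
def rectId (a b : ℕ) : Matrix (Fin a) (Fin b) ℝ :=
  Matrix.of fun i j => if (i : ℕ) = (j : ℕ) then 1 else 0

/-- Frobenius norm of a real matrix. -/
def frob {a b : ℕ} (M : Matrix (Fin a) (Fin b) ℝ) : ℝ :=
  Real.sqrt (∑ i, ∑ j, (M i j) ^ 2)

/-- Euclidean norm of a vector. -/
def enorm2 {a : ℕ} (v : Fin a → ℝ) : ℝ :=
  Real.sqrt (∑ i, (v i) ^ 2)

/-- `X` is the cluster-indicator matrix of the partition of `Fin n` into the
(nonempty) fibers of the surjective map `f : Fin n → Fin k`. -/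
def IsIndicatorOf {n k : ℕ} (f : Fin n → Fin k) (X : Matrix (Fin n) (Fin k) ℝ) : Prop :=
  Function.Surjective f ∧
    ∀ i j, X i j =
      if f i = j then 1 / Real.sqrt ((Finset.univ.filter fun i' => f i' = j).card) else 0

/-- `X` is a cluster-indicator matrix of a partition into `k` nonempty clusters. -/
def IsIndicator {n k : ℕ} (X : Matrix (Fin n) (Fin k) ℝ) : Prop :=
  ∃ f : Fin n → Fin k, IsIndicatorOf f X

/-- The k-means cost of the assignment `X` on the feature matrix `M`. -/
def kmeansCost {n k m : ℕ} (M : Matrix (Fin n) (Fin m) ℝ)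
    (X : Matrix (Fin n) (Fin k) ℝ) : ℝ :=
  frob (M - X * Xᵀ * M)

/-- `X` minimizes the k-means cost on features `M` over all indicator matrices. -/
def IsOptAssign {n k m : ℕ} (M : Matrix (Fin n) (Fin m) ℝ)
    (X : Matrix (Fin n) (Fin k) ℝ) : Prop :=
  IsIndicator X ∧
    ∀ Y : Matrix (Fin n) (Fin k) ℝ, IsIndicator Y → kmeansCost M X ≤ kmeansCost M Y

/-- Law of an `n × d` random matrix with i.i.d. Gaussian entries of
mean `0` and variance `1 / d`. -/
def gaussMeasure (n d : ℕ) : Measure (Fin n → Fin d → ℝ) :=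
  Measure.pi fun _ => Measure.pi fun _ => gaussianReal 0 (d : NNReal)⁻¹

/- ------------------ auxiliary lemmas ------------------ -/

lemma sum_sq_eq_trace {a b : ℕ} (M : Matrix (Fin a) (Fin b) ℝ) :
    ∑ i, ∑ j, (M i j) ^ 2 = Matrix.trace (M * Mᵀ) := by
  simp [Matrix.trace, Matrix.mul_apply, Matrix.diag, sq]

lemma trace_self_nonneg {a b : ℕ} (M : Matrix (Fin a) (Fin b) ℝ) :
    0 ≤ Matrix.trace (M * Mᵀ) := by
  rw [← sum_sq_eq_trace]; positivity

lemma frob_nonneg {a b : ℕ} (M : Matrix (Fin a) (Fin b) ℝ) : 0 ≤ frob M :=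
  Real.sqrt_nonneg _

lemma frob_sq {a b : ℕ} (M : Matrix (Fin a) (Fin b) ℝ) :
    frob M ^ 2 = Matrix.trace (M * Mᵀ) := by
  rw [frob, Real.sq_sqrt (by positivity), sum_sq_eq_trace]

/-- spectral bound lemma -/
lemma trace_quad_bounds {k n : ℕ} {S : Matrix (Fin k) (Fin k) ℝ} (hS : S.IsHermitian)
    (A : Matrix (Fin n) (Fin k) ℝ) (c C : ℝ)
    (hc : ∀ i, c ≤ hS.eigenvalues i) (hC : ∀ i, hS.eigenvalues i ≤ C) :
    c * Matrix.trace (A * Aᵀ) ≤ Matrix.trace (A * S * Aᵀ) ∧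
      Matrix.trace (A * S * Aᵀ) ≤ C * Matrix.trace (A * Aᵀ) := by
  set V : Matrix (Fin k) (Fin k) ℝ := (hS.eigenvectorUnitary : Matrix (Fin k) (Fin k) ℝ) with hV
  have hspec : S = V * diagonal hS.eigenvalues * Vᵀ := by
    have h := hS.spectral_theorem
    rw [Unitary.conjStarAlgAut_apply, Matrix.star_eq_conjTranspose, conjTranspose_eq_transpose_of_trivial] at h
    simpa using h
  have hVVt : V * Vᵀ = 1 := by
    have h := (Matrix.mem_unitaryGroup_iff).mp hS.eigenvectorUnitary.2
    rwa [Matrix.star_eq_conjTranspose, conjTranspose_eq_transpose_of_trivial] at h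
  set B := A * V with hB
  have h1 : A * S * Aᵀ = B * diagonal hS.eigenvalues * Bᵀ := by
    calc A * S * Aᵀ = A * (V * diagonal hS.eigenvalues * Vᵀ) * Aᵀ := by rw [← hspec]
    _ = B * diagonal hS.eigenvalues * Bᵀ := by
        rw [hB, Matrix.transpose_mul]; simp only [Matrix.mul_assoc]
  have h2 : A * Aᵀ = B * Bᵀ := by
    rw [hB, Matrix.transpose_mul, ← Matrix.mul_assoc, Matrix.mul_assoc A V, hVVt,
      Matrix.mul_one]
  have htr : Matrix.trace (B * diagonal hS.eigenvalues * Bᵀ)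
      = ∑ i, ∑ j, hS.eigenvalues j * (B i j) ^ 2 := by
    simp only [Matrix.trace, Matrix.diag, Matrix.mul_apply, Matrix.transpose_apply,
      Matrix.mul_diagonal]
    rw [Finset.sum_congr rfl]
    intro i _
    rw [Finset.sum_congr rfl]
    intro j _
    rw [Finset.sum_mul]
    simp only [Matrix.diagonal_apply, ite_mul, zero_mul, mul_ite, mul_zero,
      Finset.sum_ite_eq', Finset.mem_univ, if_true]
    ring
  rw [h1, h2, htr, ← sum_sq_eq_trace]
  constructor
  · rw [Finset.mul_sum]
    refine Finset.sum_le_sum fun i _ => ?_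
    rw [Finset.mul_sum]
    exact Finset.sum_le_sum fun j _ => mul_le_mul_of_nonneg_right (hc j) (sq_nonneg _)
  · rw [Finset.mul_sum]
    refine Finset.sum_le_sum fun i _ => ?_
    rw [Finset.mul_sum]
    exact Finset.sum_le_sum fun j _ => mul_le_mul_of_nonneg_right (hC j) (sq_nonneg _)

lemma indicator_orth {n k : ℕ} {f : Fin n → Fin k} {X : Matrix (Fin n) (Fin k) ℝ}
    (h : IsIndicatorOf f X) : Xᵀ * X = 1 := by
  obtain ⟨hsurj, hX⟩ := h
  ext j j'
  rw [Matrix.mul_apply]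
  rcases eq_or_ne j j' with rfl | hne
  · have hterm : ∀ i, Xᵀ j i * X i j =
        if f i = j then 1 / ((Finset.univ.filter fun i' => f i' = j).card : ℝ) else 0 := by
      intro i
      rw [Matrix.transpose_apply, hX]
      by_cases hfi : f i = j
      · rw [if_pos hfi, if_pos hfi, div_mul_div_comm, one_mul,
          Real.mul_self_sqrt (Nat.cast_nonneg _)]
      · simp [hfi]
    rw [Finset.sum_congr rfl fun i _ => hterm i, ← Finset.sum_filter,
      Finset.sum_const, nsmul_eq_mul, Matrix.one_apply_eq]
    have hpos : (0:ℝ) < ((Finset.univ.filter fun i' => f i' = j).card : ℝ) := by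
      obtain ⟨i, hi⟩ := hsurj j
      exact_mod_cast Finset.card_pos.mpr ⟨i, by simp [hi]⟩
    field_simp
  · rw [Matrix.one_apply_ne hne]
    apply Finset.sum_eq_zero
    intro i _
    rw [Matrix.transpose_apply, hX, hX]
    by_cases hfi : f i = j
    · rw [if_neg fun h => hne (hfi.symm.trans h), mul_zero]
    · rw [if_neg hfi, zero_mul]

lemma cost_trace {n k m : ℕ} (M : Matrix (Fin n) (Fin m) ℝ) (X : Matrix (Fin n) (Fin k) ℝ)
    (hX : Xᵀ * X = 1) :
    Matrix.trace ((M - X * Xᵀ * M) * (M - X * Xᵀ * M)ᵀ)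
      = Matrix.trace (M * Mᵀ) - Matrix.trace ((Xᵀ * M) * (Xᵀ * M)ᵀ) := by
  have hPP : X * Xᵀ * (X * Xᵀ) = X * Xᵀ := by
    have h : X * Xᵀ * (X * Xᵀ) = X * (Xᵀ * X) * Xᵀ := by simp only [Matrix.mul_assoc]
    rw [h, hX, Matrix.mul_one]
  have h1 : (M - X * Xᵀ * M) * (M - X * Xᵀ * M)ᵀ
      = M * Mᵀ - M * Mᵀ * (X * Xᵀ) - X * Xᵀ * (M * Mᵀ)
        + X * Xᵀ * (M * Mᵀ) * (X * Xᵀ) := by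
    rw [Matrix.transpose_sub, Matrix.transpose_mul, Matrix.transpose_mul,
      Matrix.transpose_transpose, Matrix.sub_mul, Matrix.mul_sub, Matrix.mul_sub]
    simp only [Matrix.mul_assoc]
    abel
  have h2 : Matrix.trace (X * Xᵀ * (M * Mᵀ)) = Matrix.trace (M * Mᵀ * (X * Xᵀ)) :=
    Matrix.trace_mul_comm _ _
  have h3 : Matrix.trace (X * Xᵀ * (M * Mᵀ) * (X * Xᵀ)) = Matrix.trace (M * Mᵀ * (X * Xᵀ)) := by
    rw [Matrix.trace_mul_comm, ← Matrix.mul_assoc, hPP]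
    exact Matrix.trace_mul_comm _ _
  have h4 : (Xᵀ * M) * (Xᵀ * M)ᵀ = Xᵀ * (M * Mᵀ * X) := by
    rw [Matrix.transpose_mul, Matrix.transpose_transpose]
    simp only [Matrix.mul_assoc]
  have h5 : Matrix.trace ((Xᵀ * M) * (Xᵀ * M)ᵀ) = Matrix.trace (M * Mᵀ * (X * Xᵀ)) := by
    rw [h4, Matrix.trace_mul_comm, Matrix.mul_assoc]
  rw [h1, Matrix.trace_add, Matrix.trace_sub, Matrix.trace_sub, h2, h3, h5]
  ring

lemma rectId_orth {n k : ℕ} (hnk : k ≤ n) : (rectId n k)ᵀ * rectId n k = 1 := by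
  ext j j'
  rw [Matrix.mul_apply]
  simp only [rectId, Matrix.transpose_apply, Matrix.of_apply]
  rcases eq_or_ne j j' with rfl | hne
  · rw [Matrix.one_apply_eq]
    rw [Finset.sum_eq_single (⟨(j : ℕ), lt_of_lt_of_le j.isLt hnk⟩ : Fin n)]
    · simp
    · intro i _ hi
      have h : ¬((i : ℕ) = (j : ℕ)) := fun h => hi (by ext; simpa using h)
      simp [h]
    · simp
  · rw [Matrix.one_apply_ne hne]
    apply Finset.sum_eq_zero
    intro i _
    by_cases h1 : (i : ℕ) = (j : ℕ) <;> by_cases h2 : (i : ℕ) = (j' : ℕ)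
    · exact absurd (Fin.ext (h1.symm.trans h2)) hne
    · simp [h2]
    · simp [h1]
    · simp [h1]

/-- square root comparison helper -/
lemma le_of_sq_le_sq' {x y : ℝ} (hy : 0 ≤ y) (h : x ^ 2 ≤ y ^ 2) (hx : 0 ≤ x) : x ≤ y := by
  nlinarith

set_option maxHeartbeats 1000000 in
/-- multiplicative bound `C_Ψ ≤ C_Φ (1 + 2(√k + t)/√(s d))` under a
singular-value condition and a per-cluster spread `≥ s` condition on the SC optimum. -/
theorem statement9 {n k d : ℕ} (hnk : k ≤ n) (hkd : k ≤ d) (t s : ℝ)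
    (ht : 0 ≤ t) (hs : 0 < s)
    (U : Matrix (Fin n) (Fin n) ℝ) (hU : Uᵀ * U = 1)
    (R : Matrix (Fin n) (Fin d) ℝ)
    (Φ : Matrix (Fin n) (Fin k) ℝ) (hΦ : Φ = U * rectId n k)
    (Ψ : Matrix (Fin n) (Fin d) ℝ) (hΨ : Ψ = Φ * Φᵀ * R)
    (hH : (Φᵀ * R * (Φᵀ * R)ᵀ).IsHermitian)
    (hsing : ∀ i : Fin k,
      |Real.sqrt (hH.eigenvalues i) - 1| ≤ (Real.sqrt k + t) / Real.sqrt d)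
    (f : Fin n → Fin k) (XΦ : Matrix (Fin n) (Fin k) ℝ)
    (hXf : IsIndicatorOf f XΦ) (hXΦ : IsOptAssign Φ XΦ)
    (μ : Fin k → Fin k → ℝ)
    (hμ : ∀ j l, μ j l =
      (∑ i ∈ Finset.univ.filter fun i' => f i' = j, Φ i l) /
        ((Finset.univ.filter fun i' => f i' = j).card : ℝ))
    (hspread : ∀ j : Fin k,
      s ≤ ∑ i ∈ Finset.univ.filter fun i' => f i' = j,
        enorm2 (fun l => Φ i l - μ j l) ^ 2)
    (XΨ : Matrix (Fin n) (Fin k) ℝ) (hXΨ : IsOptAssign Ψ XΨ) :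
    kmeansCost Φ XΨ ≤
      kmeansCost Φ XΦ * (1 + 2 * (Real.sqrt k + t) / Real.sqrt (s * d)) := by
  classical
  set ε : ℝ := (Real.sqrt k + t) / Real.sqrt d with hε
  have hε0 : 0 ≤ ε := by
    apply div_nonneg (by positivity) (Real.sqrt_nonneg _)
  -- orthonormality of Φ
  have hΦorth : Φᵀ * Φ = 1 := by
    rw [hΦ, Matrix.transpose_mul, Matrix.mul_assoc, ← Matrix.mul_assoc Uᵀ U, hU,
      Matrix.one_mul, rectId_orth hnk]
  have htrΦ : Matrix.trace (Φ * Φᵀ) = (k : ℝ) := by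
    rw [Matrix.trace_mul_comm, hΦorth, Matrix.trace_one]
    simp
  -- indicator orthonormality
  obtain ⟨g, hg⟩ := hXΨ.1
  have horthΨ : XΨᵀ * XΨ = 1 := indicator_orth hg
  have horthΦ : XΦᵀ * XΦ = 1 := indicator_orth hXf
  -- abbreviations
  set AΨ := Φ - XΨ * XΨᵀ * Φ with hAΨ
  set AΦ := Φ - XΦ * XΦᵀ * Φ with hAΦ
  set a := kmeansCost Φ XΨ with ha
  set b := kmeansCost Φ XΦ with hb
  have ha' : a = frob AΨ := rfl
  have hb' : b = frob AΦ := rfl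
  have ha0 : 0 ≤ a := frob_nonneg _
  have hb0 : 0 ≤ b := frob_nonneg _
  -- a² ≤ k, b² ≤ k
  have hak : a ^ 2 ≤ (k : ℝ) := by
    rw [ha', frob_sq, cost_trace Φ XΨ horthΨ, ← htrΦ]
    have := trace_self_nonneg (XΨᵀ * Φ)
    linarith
  have hbk : b ^ 2 ≤ (k : ℝ) := by
    rw [hb', frob_sq, cost_trace Φ XΦ horthΦ, ← htrΦ]
    have := trace_self_nonneg (XΦᵀ * Φ)
    linarith
  have hask : a ≤ Real.sqrt k := by
    have h := Real.sqrt_le_sqrt hak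
    rwa [Real.sqrt_sq ha0] at h
  have hbsk : b ≤ Real.sqrt k := by
    have h := Real.sqrt_le_sqrt hbk
    rwa [Real.sqrt_sq hb0] at h
  -- spread lower bound : k * s ≤ b²
  have hmean : ∀ i l, (XΦ * XΦᵀ * Φ) i l = μ (f i) l := by
    intro i l
    have hXtΦ : ∀ j, (XΦᵀ * Φ) j l =
        (∑ i' ∈ Finset.univ.filter fun i' => f i' = j, Φ i' l) /
          Real.sqrt ((Finset.univ.filter fun i' => f i' = j).card : ℝ) := by
      intro j
      rw [Matrix.mul_apply]
      simp only [Matrix.transpose_apply, hXf.2, ite_mul, zero_mul, one_div]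
      rw [← Finset.sum_filter, ← Finset.mul_sum, inv_mul_eq_div]
    rw [Matrix.mul_assoc, Matrix.mul_apply, hμ]
    have hterm : ∀ j, XΦ i j * (XΦᵀ * Φ) j l =
        if f i = j then
          (∑ i' ∈ Finset.univ.filter fun i' => f i' = j, Φ i' l) /
            ((Finset.univ.filter fun i' => f i' = j).card : ℝ) else 0 := by
      intro j
      rw [hXtΦ j, hXf.2]
      by_cases hfi : f i = j
      · rw [if_pos hfi, if_pos hfi, div_mul_div_comm, one_mul,
          Real.mul_self_sqrt (Nat.cast_nonneg _)]
      · rw [if_neg hfi, if_neg hfi, zero_mul]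
    rw [Finset.sum_congr rfl fun j _ => hterm j, Finset.sum_ite_eq, if_pos (Finset.mem_univ _)]
  have henorm : ∀ (i : Fin n) (j : Fin k), f i = j →
      ∑ l, (AΦ i l) ^ 2 = enorm2 (fun l => Φ i l - μ j l) ^ 2 := by
    intro i j hij
    rw [enorm2, Real.sq_sqrt (by positivity)]
    refine Finset.sum_congr rfl fun l _ => ?_
    rw [hAΦ]
    simp only [Matrix.sub_apply]
    rw [hmean i l, hij]
  have hfrobb : b ^ 2 = ∑ j, ∑ i ∈ Finset.univ.filter fun i' => f i' = j,
      enorm2 (fun l => Φ i l - μ j l) ^ 2 := by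
    rw [hb', frob, Real.sq_sqrt (by positivity),
      ← Finset.sum_fiberwise Finset.univ f (fun i => ∑ l, (AΦ i l) ^ 2)]
    refine Finset.sum_congr rfl fun j _ => Finset.sum_congr rfl fun i hi => ?_
    exact henorm i j (by simpa using (Finset.mem_filter.mp hi).2)
  have hksb : (k : ℝ) * s ≤ b ^ 2 := by
    rw [hfrobb]
    calc (k : ℝ) * s = ∑ _j : Fin k, s := by
          rw [Finset.sum_const, Finset.card_univ, Fintype.card_fin, nsmul_eq_mul]
    _ ≤ _ := Finset.sum_le_sum fun j _ => hspread j
  have hskb : Real.sqrt k * Real.sqrt s ≤ b := by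
    have h := Real.sqrt_le_sqrt hksb
    rwa [Real.sqrt_sq hb0, Real.sqrt_mul (Nat.cast_nonneg k)] at h
  -- eigenvalue bounds
  have hPSD : (Φᵀ * R * (Φᵀ * R)ᵀ).PosSemidef := by
    have h := Matrix.posSemidef_self_mul_conjTranspose (Φᵀ * R)
    rwa [conjTranspose_eq_transpose_of_trivial] at h
  have hl0 : ∀ i, 0 ≤ hH.eigenvalues i := fun i => hPSD.eigenvalues_nonneg i
  have hlup : ∀ i, hH.eigenvalues i ≤ (1 + ε) ^ 2 := by
    intro i
    have h := abs_le.mp (hsing i)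
    have h0 := hl0 i
    nlinarith [Real.sq_sqrt h0, Real.sqrt_nonneg (hH.eigenvalues i)]
  -- Ψ cost rewriting
  have hΨcost : ∀ X : Matrix (Fin n) (Fin k) ℝ,
      Ψ - X * Xᵀ * Ψ = (Φ - X * Xᵀ * Φ) * (Φᵀ * R) := by
    intro X
    rw [hΨ, Matrix.sub_mul]
    simp only [Matrix.mul_assoc]
  have hfrobAR : ∀ A : Matrix (Fin n) (Fin k) ℝ,
      frob (A * (Φᵀ * R)) ^ 2 = Matrix.trace (A * (Φᵀ * R * (Φᵀ * R)ᵀ) * Aᵀ) := by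
    intro A
    rw [frob_sq]
    congr 1
    rw [Matrix.transpose_mul]
    simp only [Matrix.mul_assoc]
  set r := frob (AΨ * (Φᵀ * R)) with hr
  set q := frob (AΦ * (Φᵀ * R)) with hq
  have hr0 : 0 ≤ r := frob_nonneg _
  have hq0 : 0 ≤ q := frob_nonneg _
  -- optimality: r ≤ q
  have hrq : r ≤ q := by
    have h := hXΨ.2 XΦ ⟨f, hXf⟩
    rw [kmeansCost, kmeansCost, hΨcost XΨ, hΨcost XΦ] at h
    exact h
  -- upper bound: q ≤ (1+ε) b
  have hqb : q ≤ (1 + ε) * b := by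
    have h2 := (trace_quad_bounds hH AΦ 0 ((1 + ε)^2) hl0 hlup).2
    have hq2 : q ^ 2 ≤ ((1 + ε) * b) ^ 2 := by
      rw [hq, hfrobAR AΦ, mul_pow]
      calc Matrix.trace (AΦ * (Φᵀ * R * (Φᵀ * R)ᵀ) * AΦᵀ)
          ≤ (1 + ε)^2 * Matrix.trace (AΦ * AΦᵀ) := h2
      _ = (1 + ε)^2 * b^2 := by rw [hb', frob_sq]
    exact le_of_sq_le_sq' (mul_nonneg (by linarith) hb0) hq2 hq0
  -- lower bound : (1-ε) a ≤ r
  have har : (1 - ε) * a ≤ r := by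
    by_cases hε1 : ε ≤ 1
    · have hllo : ∀ i, (1 - ε)^2 ≤ hH.eigenvalues i := by
        intro i
        have h := abs_le.mp (hsing i)
        have h0 := hl0 i
        nlinarith [Real.sq_sqrt h0, Real.sqrt_nonneg (hH.eigenvalues i)]
      have h1 := (trace_quad_bounds hH AΨ ((1 - ε)^2) ((1 + ε)^2) hllo hlup).1
      have ha2 : ((1 - ε) * a) ^ 2 ≤ r ^ 2 := by
        rw [hr, hfrobAR AΨ, mul_pow]
        calc (1 - ε)^2 * a^2 = (1 - ε)^2 * Matrix.trace (AΨ * AΨᵀ) := by rw [ha', frob_sq]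
        _ ≤ _ := h1
      exact le_of_sq_le_sq' hr0 ha2 (by nlinarith)
    · have : (1 - ε) * a ≤ 0 := mul_nonpos_of_nonpos_of_nonneg (by linarith) ha0
      linarith
  -- final arithmetic
  have hsq : 0 < Real.sqrt s := Real.sqrt_pos.mpr hs
  have hkb : Real.sqrt k ≤ b / Real.sqrt s := by
    rw [le_div_iff₀ hsq]
    exact hskb
  have hfin : a ≤ b + 2 * ε * (b / Real.sqrt s) := by
    have h1 : ε * a ≤ ε * (b / Real.sqrt s) :=
      mul_le_mul_of_nonneg_left (hask.trans hkb) hε0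
    have h2 : ε * b ≤ ε * (b / Real.sqrt s) :=
      mul_le_mul_of_nonneg_left (hbsk.trans hkb) hε0
    nlinarith [har, hrq, hqb]
  calc a ≤ b + 2 * ε * (b / Real.sqrt s) := hfin
  _ = b * (1 + 2 * (Real.sqrt k + t) / Real.sqrt (s * d)) := by
      rw [hε, Real.sqrt_mul hs.le]
      ring
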